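/- Defeasible Logic is coherent: for no defeasible theory D and literal p do both D ⊢ +Δp and D ⊢ -Δp hold, nor both D ⊢ +∂p and D ⊢ -∂p. -/
import Mathlib


/-! Core: propositional Defeasible Logic (proof theory via derivations) -/

/-- Literals: positive or negative atoms. -/
inductive Lit : Type
  | pos : ℕ → Lit
  | neg : ℕ → Lit
deriving DecidableEq, Repr

/-- The complement `~q` of a literal. -/
def Lit.compl : Lit → Lit
  | .pos n => .neg n
  | .neg n => .pos n

/-- The three kinds of rules in a defeasible theory. -/
inductive RuleKind : Type
  | strict | defeasible | defeater
deriving DecidableEq, Repr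

/-- A rule with a unique label (name), kind, antecedent and literal head. -/
structure DLRule : Type where
  name : ℕ
  kind : RuleKind
  ante : List Lit
  head : Lit
deriving DecidableEq, Repr

/-- A (finite, propositional) defeasible theory `D = (F, R, >)`. -/
structure DTheory : Type where
  facts : Finset Lit
  rules : Finset DLRule
  sup : DLRule → DLRule → Prop

/-- The four proof tags `+Δ`, `-Δ`, `+∂`, `-∂`. -/
inductive Tag : Type
  | pDelta | mDelta | pPartial | mPartial
deriving DecidableEq, Repr

/-- A tagged literal (a conclusion). -/
abbrev TaggedLit := Tag × Lit

/-- The inference conditions of Defeasible Logic: the tagged literal `c` may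
be appended to a derivation whose earlier lines are `prev`. -/
def ValidLine (D : DTheory) (prev : List TaggedLit) : TaggedLit → Prop
  | (Tag.pDelta, q) =>
      q ∈ D.facts ∨
      ∃ r ∈ D.rules, r.kind = RuleKind.strict ∧ r.head = q ∧
        ∀ a ∈ r.ante, (Tag.pDelta, a) ∈ prev
  | (Tag.mDelta, q) =>
      q ∉ D.facts ∧
      ∀ r ∈ D.rules, r.kind = RuleKind.strict → r.head = q →
        ∃ a ∈ r.ante, (Tag.mDelta, a) ∈ prev
  | (Tag.pPartial, q) =>
      (Tag.pDelta, q) ∈ prev ∨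
      ((∃ r ∈ D.rules, r.kind ≠ RuleKind.defeater ∧ r.head = q ∧
          ∀ a ∈ r.ante, (Tag.pPartial, a) ∈ prev) ∧
       (Tag.mDelta, q.compl) ∈ prev ∧
       ∀ s ∈ D.rules, s.head = q.compl →
         (∃ a ∈ s.ante, (Tag.mPartial, a) ∈ prev) ∨
         (∃ t ∈ D.rules, t.kind ≠ RuleKind.defeater ∧ t.head = q ∧
           (∀ a ∈ t.ante, (Tag.pPartial, a) ∈ prev) ∧ D.sup t s))
  | (Tag.mPartial, q) =>
      (Tag.mDelta, q) ∈ prev ∧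
      ((∀ r ∈ D.rules, r.kind ≠ RuleKind.defeater → r.head = q →
          ∃ a ∈ r.ante, (Tag.mPartial, a) ∈ prev) ∨
       (Tag.pDelta, q.compl) ∈ prev ∨
       (∃ s ∈ D.rules, s.head = q.compl ∧
          (∀ a ∈ s.ante, (Tag.pPartial, a) ∈ prev) ∧
          ∀ t ∈ D.rules, t.kind ≠ RuleKind.defeater → t.head = q →
            (∃ a ∈ t.ante, (Tag.mPartial, a) ∈ prev) ∨ ¬ D.sup t s))

/-- `P` is a derivation in `D`: a finite sequence of tagged literals each of
which satisfies the inference conditions w.r.t. the earlier lines. -/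
def IsDerivation (D : DTheory) (P : List TaggedLit) : Prop :=
  ∀ (i : ℕ) (h : i < P.length), ValidLine D (P.take i) (P.get ⟨i, h⟩)

/-- `D ⊢ (t, q)` : the tagged literal is a line of some derivation in `D`. -/
def Proves (D : DTheory) (t : Tag) (q : Lit) : Prop :=
  ∃ P : List TaggedLit, IsDerivation D P ∧ (t, q) ∈ P

/-- `D ⊢ +Δ q`. -/
abbrev PDelta (D : DTheory) (q : Lit) : Prop := Proves D Tag.pDelta q
/-- `D ⊢ -Δ q`. -/
abbrev MDelta (D : DTheory) (q : Lit) : Prop := Proves D Tag.mDelta q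
/-- `D ⊢ +∂ q`. -/
abbrev PPartial (D : DTheory) (q : Lit) : Prop := Proves D Tag.pPartial q
/-- `D ⊢ -∂ q`. -/
abbrev MPartial (D : DTheory) (q : Lit) : Prop := Proves D Tag.mPartial q

/-- `q` is strictly unknowable in `D`. -/
def StrictlyUnknowable (D : DTheory) (q : Lit) : Prop := ¬ PDelta D q ∧ ¬ MDelta D q

/-- `q` is defeasibly unknowable in `D`. -/
def DefeasiblyUnknowable (D : DTheory) (q : Lit) : Prop := ¬ PPartial D q ∧ ¬ MPartial D q

/-- `q` is unknowable in `D`. -/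
def Unknowable (D : DTheory) (q : Lit) : Prop :=
  StrictlyUnknowable D q ∨ DefeasiblyUnknowable D q

/-- The point `{q, ~q}` of the dependency graph corresponding to a literal `q`. -/
def Lit.pt (q : Lit) : Set Lit := {q, q.compl}

/-- Arc of the dependency graph `DG(D)` from point `{b,~b}` to point `{a,~a}`:
there is a strict or defeasible rule whose head is in `{b,~b}` and some antecedent
in `{a,~a}`.  (Stated on representative literals; it is complement-invariant.) -/
def DepArc (D : DTheory) (b a : Lit) : Prop :=
  ∃ r ∈ D.rules, r.kind ≠ RuleKind.defeater ∧
    (r.head = b ∨ r.head = b.compl) ∧ (a ∈ r.ante ∨ a.compl ∈ r.ante)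

/-- `D` is decisive iff its dependency graph is acyclic. -/
def Decisive (D : DTheory) : Prop := ∀ q : Lit, ¬ Relation.TransGen (DepArc D) q q

lemma mem_take_idx {P : List TaggedLit} {i : ℕ} {x : TaggedLit} (h : x ∈ P.take i) :
    ∃ k, ∃ hk : k < P.length, k < i ∧ P.get ⟨k, hk⟩ = x := by
  obtain ⟨k, hk, hx⟩ := List.getElem_of_mem h
  have hmin : k < min i P.length := by simpa [List.length_take] using hk
  refine ⟨k, lt_of_lt_of_le hmin (min_le_right _ _),
    lt_of_lt_of_le hmin (min_le_left _ _), ?_⟩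
  rw [← hx]
  simp [List.get_eq_getElem, List.getElem_take]

lemma proves_of_mem_take {D : DTheory} {P : List TaggedLit} {i : ℕ} {t : Tag} {q : Lit}
    (hP : IsDerivation D P) (h : (t, q) ∈ P.take i) : Proves D t q :=
  ⟨P, hP, List.take_subset i P h⟩

lemma delta_coh_aux (D : DTheory) : ∀ n : ℕ, ∀ P Q : List TaggedLit,
    IsDerivation D P → IsDerivation D Q →
    ∀ (i j : ℕ) (hi : i < P.length) (hj : j < Q.length) (q : Lit), i + j ≤ n →
    P.get ⟨i, hi⟩ = (Tag.pDelta, q) → Q.get ⟨j, hj⟩ = (Tag.mDelta, q) → False := by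
  intro n
  induction n using Nat.strong_induction_on with
  | _ n ih =>
    intro P Q hP hQ i j hi hj q hn hpi hqj
    have hvp := hP i hi
    have hvq := hQ j hj
    rw [hpi] at hvp
    rw [hqj] at hvq
    simp only [ValidLine] at hvp hvq
    rcases hvp with hfact | ⟨r, hr, hstrict, hhead, hante⟩
    · exact hvq.1 hfact
    · obtain ⟨a, ha, haQ⟩ := hvq.2 r hr hstrict hhead
      obtain ⟨k, hk, hki, hgk⟩ := mem_take_idx (hante a ha)
      obtain ⟨l, hl, hlj, hgl⟩ := mem_take_idx haQ
      exact ih (k + l) (by omega) P Q hP hQ k l hk hl a le_rfl hgk hgl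

lemma delta_coh (D : DTheory) (q : Lit) : ¬ (PDelta D q ∧ MDelta D q) := by
  rintro ⟨⟨P, hP, hmP⟩, ⟨Q, hQ, hmQ⟩⟩
  obtain ⟨⟨i, hi⟩, hgi⟩ := List.mem_iff_get.mp hmP
  obtain ⟨⟨j, hj⟩, hgj⟩ := List.mem_iff_get.mp hmQ
  exact delta_coh_aux D (i + j) P Q hP hQ i j hi hj q le_rfl hgi hgj

lemma partial_coh_aux (D : DTheory) : ∀ n : ℕ, ∀ P Q : List TaggedLit,
    IsDerivation D P → IsDerivation D Q →
    ∀ (i j : ℕ) (hi : i < P.length) (hj : j < Q.length) (q : Lit), i + j ≤ n →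
    P.get ⟨i, hi⟩ = (Tag.pPartial, q) → Q.get ⟨j, hj⟩ = (Tag.mPartial, q) → False := by
  intro n
  induction n using Nat.strong_induction_on with
  | _ n ih =>
    intro P Q hP hQ i j hi hj q hn hpi hqj
    have hvp := hP i hi
    have hvq := hQ j hj
    rw [hpi] at hvp
    rw [hqj] at hvq
    simp only [ValidLine] at hvp hvq
    obtain ⟨hmdq, hrest⟩ := hvq
    rcases hvp with hpd | ⟨⟨r, hr, hrk, hrh, hrante⟩, hmdc, hall⟩
    · exact delta_coh D q ⟨proves_of_mem_take hP hpd, proves_of_mem_take hQ hmdq⟩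
    · rcases hrest with hA | hB | ⟨s, hs, hsh, hsante, hts⟩
      · obtain ⟨a, ha, haQ⟩ := hA r hr hrk hrh
        obtain ⟨k, hk, hki, hgk⟩ := mem_take_idx (hrante a ha)
        obtain ⟨l, hl, hlj, hgl⟩ := mem_take_idx haQ
        exact ih (k + l) (by omega) P Q hP hQ k l hk hl a le_rfl hgk hgl
      · exact delta_coh D q.compl
          ⟨proves_of_mem_take hQ hB, proves_of_mem_take hP hmdc⟩
      · rcases hall s hs hsh with ⟨a, ha, haP⟩ | ⟨t, ht, htk, hth, htante, hsup⟩
        · obtain ⟨k, hk, hki, hgk⟩ := mem_take_idx (hsante a ha)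
          obtain ⟨l, hl, hlj, hgl⟩ := mem_take_idx haP
          exact ih (k + l) (by omega) Q P hQ hP k l hk hl a le_rfl hgk hgl
        · rcases hts t ht htk hth with ⟨a, ha, haQ⟩ | hns
          · obtain ⟨k, hk, hki, hgk⟩ := mem_take_idx (htante a ha)
            obtain ⟨l, hl, hlj, hgl⟩ := mem_take_idx haQ
            exact ih (k + l) (by omega) P Q hP hQ k l hk hl a le_rfl hgk hgl
          · exact hns hsup

lemma partial_coh (D : DTheory) (q : Lit) : ¬ (PPartial D q ∧ MPartial D q) := by
  rintro ⟨⟨P, hP, hmP⟩, ⟨Q, hQ, hmQ⟩⟩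
  obtain ⟨⟨i, hi⟩, hgi⟩ := List.mem_iff_get.mp hmP
  obtain ⟨⟨j, hj⟩, hgj⟩ := List.mem_iff_get.mp hmQ
  exact partial_coh_aux D (i + j) P Q hP hQ i j hi hj q le_rfl hgi hgj

/-- coherence: for no defeasible theory `D` and literal `p`
do both `D ⊢ +Δp` and `D ⊢ -Δp` hold, nor both `D ⊢ +∂p` and `D ⊢ -∂p`. -/
theorem coherence (D : DTheory) (p : Lit) :
    ¬ (PDelta D p ∧ MDelta D p) ∧ ¬ (PPartial D p ∧ MPartial D p) :=
  ⟨delta_coh D p, partial_coh D p⟩
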